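/- Let G be a graph and let G' be the graph obtained from two disjoint copies of G by adding all possible edges between the two copies (the join of G with itself). Then the tree-independence number of G' equals the independence number of G. -/

import Mathlib

open SimpleGraph

/-- `S` is an independent set in `G`. -/
def IsIndepOn {V : Type} (G : SimpleGraph V) (S : Set V) : Prop :=
  S.Pairwise fun u v => ¬ G.Adj u v

/-- The independence number of `G`. -/
noncomputable def indepNum {V : Type} (G : SimpleGraph V) : ℕ :=
  sSup {n | ∃ S : Set V, IsIndepOn G S ∧ S.ncard = n}

/-- The clique number of `G`. -/
noncomputable def cliqueNumber {V : Type} (G : SimpleGraph V) : ℕ :=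
  sSup {n | ∃ S : Set V, G.IsClique S ∧ S.ncard = n}

/-- A tree decomposition of a graph `G`. -/
structure TreeDecomp {V : Type} (G : SimpleGraph V) where
  ι : Type
  tree : SimpleGraph ι
  tree_isTree : tree.IsTree
  bag : ι → Set V
  mem_bag : ∀ v : V, ∃ t, v ∈ bag t
  edge_bag : ∀ ⦃u v : V⦄, G.Adj u v → ∃ t, u ∈ bag t ∧ v ∈ bag t
  bag_connected : ∀ v : V, (tree.induce {t | v ∈ bag t}).Connected

/-- The independence number of a family of bags: the maximum independence number
of a subgraph of `G` induced by some bag. -/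
noncomputable def bagAlpha {V : Type} (G : SimpleGraph V) {ι : Type} (bag : ι → Set V) : ℕ :=
  sSup {n | ∃ t, ∃ S : Set V, S ⊆ bag t ∧ IsIndepOn G S ∧ S.ncard = n}

/-- The independence number of a tree decomposition. -/
noncomputable def tdAlpha {V : Type} {G : SimpleGraph V} (td : TreeDecomp G) : ℕ :=
  bagAlpha G td.bag

/-- The width of a tree decomposition: maximum bag size minus one. -/
noncomputable def tdWidth {V : Type} {G : SimpleGraph V} (td : TreeDecomp G) : ℕ :=
  sSup {n | ∃ t, (td.bag t).ncard = n} - 1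

/-- The treewidth of `G`. -/
noncomputable def treewidth {V : Type} (G : SimpleGraph V) : ℕ :=
  sInf {w | ∃ td : TreeDecomp G, tdWidth td = w}

/-- The tree-independence number of `G`. -/
noncomputable def treeIndepNum {V : Type} (G : SimpleGraph V) : ℕ :=
  sInf {k | ∃ td : TreeDecomp G, tdAlpha td = k}

/-- A graph is chordal if it has no induced cycle of length at least four. -/
def Chordal {V : Type} (G : SimpleGraph V) : Prop :=
  ∀ n : ℕ, 4 ≤ n → IsEmpty (cycleGraph n ↪g G)

/-- The join of `G` with a disjoint copy of itself: two disjoint copies of `G`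
with all possible edges between the copies. -/
def joinSelf {V : Type} (G : SimpleGraph V) : SimpleGraph (V ⊕ V) :=
  SimpleGraph.fromRel fun x y =>
    match x, y with
    | .inl a, .inl b => G.Adj a b
    | .inr a, .inr b => G.Adj a b
    | _, _ => True

/-! ### Auxiliary lemmas -/

open Walk in
private lemma aux_path_length_eq_dist {ι : Type} [DecidableEq ι] {T : SimpleGraph ι} (ht : T.IsTree)
    {a b : ι} (p : T.Walk a b) (hp : p.IsPath) : p.length = T.dist a b := by
  obtain ⟨w, hw⟩ := ht.isConnected.exists_walk_length_eq_dist a b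
  have h2 : (⟨w.bypass, w.bypass_isPath⟩ : T.Path a b) = ⟨p, hp⟩ :=
    ht.IsAcyclic.path_unique _ _
  have h3 : w.bypass = p := congrArg Subtype.val h2
  have h4 : p.length ≤ w.length := h3 ▸ w.length_bypass_le
  exact le_antisymm (hw ▸ h4) (SimpleGraph.dist_le p)

open Walk in
private lemma aux_gate_mem {ι : Type} [DecidableEq ι] {T : SimpleGraph ι} (ht : T.IsTree)
    {C : Set ι} {r t0 : ι} (ht0 : t0 ∈ C)
    (hmin : ∀ c ∈ C, T.dist r t0 ≤ T.dist r c) :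
    ∀ {s : ι} (q : T.Walk s t0), (∀ x ∈ q.support, x ∈ C) →
      ∀ (π : T.Walk r s), π.IsPath → t0 ∈ π.support := by
  intro s q
  induction q with
  | nil => intro _ π _; exact π.end_mem_support
  | @cons s s1 _ h q ih =>
    intro hsup π hπ
    have hq : ∀ x ∈ q.support, x ∈ C := fun x hx =>
      hsup x (by rw [support_cons]; exact List.mem_cons_of_mem _ hx)
    have hs1C : s1 ∈ C := hsup s1 (by
      rw [support_cons]; exact List.mem_cons_of_mem _ q.start_mem_support)
    by_cases hmem : s1 ∈ π.support
    · have := ih ht0 hmin hq (π.takeUntil s1 hmem) (hπ.takeUntil hmem)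
      exact π.support_takeUntil_subset hmem this
    · have hπ' : (π.concat h).IsPath := by
        rw [isPath_def, support_concat]
        exact List.Nodup.append hπ.support_nodup (List.nodup_singleton s1)
          (by simpa using hmem)
      have ht0' := ih ht0 hmin hq (π.concat h) hπ'
      rw [support_concat, List.mem_append] at ht0'
      rcases ht0' with h1 | h1
      · exact h1
      · simp only [List.mem_singleton] at h1
        subst h1
        exfalso
        have hl1 : π.length = T.dist r s := aux_path_length_eq_dist ht π hπ
        have hl2 := aux_path_length_eq_dist ht _ hπ'
        rw [length_concat, hl1] at hl2
        have hsC : s ∈ C := hsup s (by rw [support_cons]; exact List.mem_cons_self)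
        have h5 := hmin s hsC
        omega

open Walk in
private lemma aux_exists_path_in {ι : Type} [DecidableEq ι] {T : SimpleGraph ι} {C : Set ι}
    (hC : (T.induce C).Connected) {a b : ι} (ha : a ∈ C) (hb : b ∈ C) :
    ∃ w : T.Walk a b, w.IsPath ∧ ∀ x ∈ w.support, x ∈ C := by
  obtain ⟨w0⟩ := hC ⟨a, ha⟩ ⟨b, hb⟩
  let w1 : T.Walk a b := w0.map (Embedding.induce C).toHom
  have hsub : ∀ x ∈ w1.support, x ∈ C := by
    intro x hx
    rw [show w1.support = _ from Walk.support_map _ _] at hx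
    obtain ⟨y, _, rfl⟩ := List.mem_map.mp hx
    exact y.2
  exact ⟨w1.bypass, w1.bypass_isPath, fun x hx => hsub x (w1.support_bypass_subset hx)⟩

open Walk in
private lemma aux_exists_bag_closed_nbhd {W : Type} [Finite W] [Nonempty W]
    {H : SimpleGraph W} (td : TreeDecomp H) :
    ∃ (v : W) (t : td.ι), ∀ u : W, H.Adj u v → u ∈ td.bag t := by
  classical
  set T := td.tree with hT
  have ht : T.IsTree := td.tree_isTree
  have hne : Nonempty td.ι := ht.isConnected.nonempty
  obtain ⟨r⟩ := hne
  have hsel : ∀ w : W, ∃ t, w ∈ td.bag t ∧ ∀ t', w ∈ td.bag t' → T.dist r t ≤ T.dist r t' := by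
    intro w
    have hDne : {n | ∃ t, w ∈ td.bag t ∧ T.dist r t = n}.Nonempty := by
      obtain ⟨t, htw⟩ := td.mem_bag w
      exact ⟨T.dist r t, t, htw, rfl⟩
    obtain ⟨t, htw, htd⟩ := Nat.sInf_mem hDne
    exact ⟨t, htw, fun t' ht' => htd ▸ Nat.sInf_le ⟨t', ht', rfl⟩⟩
  choose tw htw hmin using hsel
  obtain ⟨v, hv⟩ := Finite.exists_max (fun w => T.dist r (tw w))
  refine ⟨v, tw v, fun u hadj => ?_⟩
  obtain ⟨s, hus, hvs⟩ := td.edge_bag hadj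
  obtain ⟨w0⟩ := ht.isConnected r s
  set π := w0.bypass with hπdef
  have hπ : π.IsPath := w0.bypass_isPath
  obtain ⟨qu, hqu, hquC⟩ := aux_exists_path_in (td.bag_connected u) (htw u) hus
  obtain ⟨qv, hqv, hqvC⟩ := aux_exists_path_in (td.bag_connected v) (htw v) hvs
  have hminu : ∀ c ∈ {t | u ∈ td.bag t}, T.dist r (tw u) ≤ T.dist r c :=
    fun c hc => hmin u c hc
  have hminv : ∀ c ∈ {t | v ∈ td.bag t}, T.dist r (tw v) ≤ T.dist r c :=
    fun c hc => hmin v c hc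
  have h1 : tw u ∈ π.support := by
    refine aux_gate_mem ht (htw u) hminu qu.reverse ?_ π hπ
    intro x hx; rw [support_reverse, List.mem_reverse] at hx; exact hquC x hx
  have h2 : tw v ∈ π.support := by
    refine aux_gate_mem ht (htw v) hminv qv.reverse ?_ π hπ
    intro x hx; rw [support_reverse, List.mem_reverse] at hx; exact hqvC x hx
  have hρ : (π.dropUntil (tw u) h1).IsPath := hπ.dropUntil h1
  have hρsub : ∀ x ∈ (π.dropUntil (tw u) h1).support, u ∈ td.bag x := by
    have heq : (⟨π.dropUntil (tw u) h1, hρ⟩ : T.Path (tw u) s) = ⟨qu, hqu⟩ :=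
      ht.IsAcyclic.path_unique _ _
    have h6 : π.dropUntil (tw u) h1 = qu := congrArg Subtype.val heq
    rw [h6]; exact hquC
  have hkey : tw v ∈ (π.dropUntil (tw u) h1).support := by
    have hsplit := π.take_spec h1
    rw [← hsplit, mem_support_append_iff] at h2
    rcases h2 with h2 | h2
    · have hw1 : (π.takeUntil (tw u) h1).IsPath := hπ.takeUntil h1
      have hl1 : (π.takeUntil (tw u) h1).length = T.dist r (tw u) :=
        aux_path_length_eq_dist ht _ hw1
      have hw2 : ((π.takeUntil (tw u) h1).takeUntil (tw v) h2).IsPath := hw1.takeUntil h2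
      have hl2 : ((π.takeUntil (tw u) h1).takeUntil (tw v) h2).length = T.dist r (tw v) :=
        aux_path_length_eq_dist ht _ hw2
      have hsplit2 := (π.takeUntil (tw u) h1).take_spec h2
      have hlen : ((π.takeUntil (tw u) h1).takeUntil (tw v) h2).length
          + ((π.takeUntil (tw u) h1).dropUntil (tw v) h2).length
          = (π.takeUntil (tw u) h1).length := by
        rw [← length_append, hsplit2]
      have hle := hv u
      have hzero : ((π.takeUntil (tw u) h1).dropUntil (tw v) h2).length = 0 := by omega
      have heq2 := eq_of_length_eq_zero hzero
      rw [heq2]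
      exact start_mem_support _
    · exact h2
  exact hρsub _ hkey

/-- The trivial tree decomposition with a single bag containing everything. -/
private def trivTD {W : Type} (H : SimpleGraph W) : TreeDecomp H where
  ι := Unit
  tree := ⊥
  tree_isTree := by
    constructor
    · exact ⟨fun a b => by rw [Subsingleton.elim a b]⟩
    · intro v c hc
      cases c with
      | nil => exact hc.ne_nil rfl
      | cons h _ => simp at h
  bag := fun _ => Set.univ
  mem_bag := fun v => ⟨(), Set.mem_univ v⟩
  edge_bag := fun u v _ => ⟨(), Set.mem_univ u, Set.mem_univ v⟩
  bag_connected := fun v => by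
    haveI : Nonempty ↑{t : Unit | v ∈ (fun _ : Unit => (Set.univ : Set W)) t} :=
      ⟨⟨(), Set.mem_univ v⟩⟩
    exact ⟨fun a b => by rw [Subsingleton.elim a b]⟩

private lemma tdAlpha_trivTD {W : Type} (H : SimpleGraph W) :
    tdAlpha (trivTD H) = _root_.indepNum H := by
  unfold tdAlpha bagAlpha _root_.indepNum
  congr 1
  ext n
  constructor
  · rintro ⟨t, S, _, hi, hn⟩; exact ⟨S, hi, hn⟩
  · rintro ⟨S, hi, hn⟩; exact ⟨(), S, Set.subset_univ S, hi, hn⟩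

private lemma joinSelf_adj_inl_inl {V : Type} (G : SimpleGraph V) (a b : V) :
    (joinSelf G).Adj (.inl a) (.inl b) ↔ G.Adj a b := by
  constructor
  · rintro ⟨hne, h | h⟩
    · exact h
    · exact h.symm
  · intro h
    exact ⟨by simpa using h.ne, Or.inl h⟩

private lemma joinSelf_adj_inr_inr {V : Type} (G : SimpleGraph V) (a b : V) :
    (joinSelf G).Adj (.inr a) (.inr b) ↔ G.Adj a b := by
  constructor
  · rintro ⟨hne, h | h⟩
    · exact h
    · exact h.symm
  · intro h
    exact ⟨by simpa using h.ne, Or.inl h⟩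

private lemma joinSelf_adj_inl_inr {V : Type} (G : SimpleGraph V) (a b : V) :
    (joinSelf G).Adj (.inl a) (.inr b) :=
  ⟨by simp, Or.inl trivial⟩

private lemma indep_sets_joinSelf {V : Type} (G : SimpleGraph V) :
    {n | ∃ S : Set (V ⊕ V), IsIndepOn (joinSelf G) S ∧ S.ncard = n}
      = {n | ∃ S : Set V, IsIndepOn G S ∧ S.ncard = n} := by
  ext n
  constructor
  · rintro ⟨S, hS, rfl⟩
    by_cases hc : ∃ a, Sum.inl a ∈ S
    · obtain ⟨a, ha⟩ := hc
      have hsub : S ⊆ Set.range Sum.inl := by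
        intro x hx
        cases x with
        | inl c => exact ⟨c, rfl⟩
        | inr c =>
          exact absurd (joinSelf_adj_inl_inr G a c) (hS ha hx (by simp))
      obtain ⟨T, rfl⟩ := Set.subset_range_iff_exists_image_eq.mp hsub
      refine ⟨T, ?_, (Set.ncard_image_of_injective T Sum.inl_injective).symm⟩
      intro x hx y hy hxy
      have := hS (Set.mem_image_of_mem _ hx) (Set.mem_image_of_mem _ hy)
        (by simpa using hxy)
      exact fun hadj => this ((joinSelf_adj_inl_inl G x y).mpr hadj)
    · have hsub : S ⊆ Set.range Sum.inr := by
        intro x hx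
        cases x with
        | inl c => exact absurd ⟨c, hx⟩ hc
        | inr c => exact ⟨c, rfl⟩
      obtain ⟨T, rfl⟩ := Set.subset_range_iff_exists_image_eq.mp hsub
      refine ⟨T, ?_, (Set.ncard_image_of_injective T Sum.inr_injective).symm⟩
      intro x hx y hy hxy
      have := hS (Set.mem_image_of_mem _ hx) (Set.mem_image_of_mem _ hy)
        (by simpa using hxy)
      exact fun hadj => this ((joinSelf_adj_inr_inr G x y).mpr hadj)
  · rintro ⟨S, hS, rfl⟩
    refine ⟨Sum.inl '' S, ?_, Set.ncard_image_of_injective S Sum.inl_injective⟩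
    rintro _ ⟨x, hx, rfl⟩ _ ⟨y, hy, rfl⟩ hxy
    have hxy' : x ≠ y := by simpa using hxy
    intro hadj
    exact hS hx hy hxy' ((joinSelf_adj_inl_inl G x y).mp hadj)

private lemma indepNum_joinSelf {V : Type} (G : SimpleGraph V) :
    _root_.indepNum (joinSelf G) = _root_.indepNum G := by
  unfold _root_.indepNum
  rw [indep_sets_joinSelf]

private lemma indep_image_inr {V : Type} (G : SimpleGraph V) {S : Set V}
    (hS : IsIndepOn G S) : IsIndepOn (joinSelf G) (Sum.inr '' S) := by
  rintro _ ⟨x, hx, rfl⟩ _ ⟨y, hy, rfl⟩ hxy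
  intro hadj
  exact hS hx hy (by simpa using hxy) ((joinSelf_adj_inr_inr G x y).mp hadj)

private lemma indep_image_inl {V : Type} (G : SimpleGraph V) {S : Set V}
    (hS : IsIndepOn G S) : IsIndepOn (joinSelf G) (Sum.inl '' S) := by
  rintro _ ⟨x, hx, rfl⟩ _ ⟨y, hy, rfl⟩ hxy
  intro hadj
  exact hS hx hy (by simpa using hxy) ((joinSelf_adj_inl_inl G x y).mp hadj)

private lemma bagAlpha_bddAbove {W : Type} [Finite W] (H : SimpleGraph W) {ι : Type}
    (bag : ι → Set W) :
    BddAbove {n | ∃ t, ∃ S : Set W, S ⊆ bag t ∧ IsIndepOn H S ∧ S.ncard = n} := by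
  refine ⟨Nat.card W, ?_⟩
  rintro n ⟨t, S, _, _, rfl⟩
  calc S.ncard ≤ (Set.univ : Set W).ncard :=
        Set.ncard_le_ncard (Set.subset_univ S) Set.finite_univ
    _ = Nat.card W := Set.ncard_univ W

private lemma indepNum_mem {V : Type} [Finite V] (G : SimpleGraph V) :
    ∃ S : Set V, IsIndepOn G S ∧ S.ncard = _root_.indepNum G := by
  have hne : {n | ∃ S : Set V, IsIndepOn G S ∧ S.ncard = n}.Nonempty :=
    ⟨0, ∅, Set.pairwise_empty _, Set.ncard_empty V⟩
  have hbdd : BddAbove {n | ∃ S : Set V, IsIndepOn G S ∧ S.ncard = n} := by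
    refine ⟨Nat.card V, ?_⟩
    rintro n ⟨S, _, rfl⟩
    calc S.ncard ≤ (Set.univ : Set V).ncard :=
          Set.ncard_le_ncard (Set.subset_univ S) Set.finite_univ
      _ = Nat.card V := Set.ncard_univ V
  exact Nat.sSup_mem hne hbdd

private lemma indepNum_le_tdAlpha {V : Type} [Fintype V] (G : SimpleGraph V)
    (td : TreeDecomp (joinSelf G)) : _root_.indepNum G ≤ tdAlpha td := by
  classical
  cases isEmpty_or_nonempty V with
  | inl hE =>
    have h0 : _root_.indepNum G = 0 := by
      unfold _root_.indepNum
      have hset : {n | ∃ S : Set V, IsIndepOn G S ∧ S.ncard = n} = {0} := by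
        ext n
        constructor
        · rintro ⟨S, _, rfl⟩
          have : S = ∅ := Set.eq_empty_of_isEmpty S
          simp [this]
        · rintro rfl
          exact ⟨∅, Set.pairwise_empty _, Set.ncard_empty V⟩
      rw [hset, csSup_singleton]
    rw [h0]
    exact Nat.zero_le _
  | inr hne =>
    obtain ⟨S, hS, hScard⟩ := indepNum_mem G
    obtain ⟨v, t, hbag⟩ := aux_exists_bag_closed_nbhd td
    cases v with
    | inl a =>
      have hsub : Sum.inr '' S ⊆ td.bag t := by
        rintro _ ⟨x, _, rfl⟩
        exact hbag _ ((joinSelf_adj_inl_inr G a x).symm)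
      have hmem : _root_.indepNum G ∈
          {n | ∃ t', ∃ S' : Set (V ⊕ V), S' ⊆ td.bag t' ∧
            IsIndepOn (joinSelf G) S' ∧ S'.ncard = n} :=
        ⟨t, Sum.inr '' S, hsub, indep_image_inr G hS,
          by rw [Set.ncard_image_of_injective S Sum.inr_injective, hScard]⟩
      exact le_csSup (bagAlpha_bddAbove (joinSelf G) td.bag) hmem
    | inr a =>
      have hsub : Sum.inl '' S ⊆ td.bag t := by
        rintro _ ⟨x, _, rfl⟩
        exact hbag _ (joinSelf_adj_inl_inr G x a)
      have hmem : _root_.indepNum G ∈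
          {n | ∃ t', ∃ S' : Set (V ⊕ V), S' ⊆ td.bag t' ∧
            IsIndepOn (joinSelf G) S' ∧ S'.ncard = n} :=
        ⟨t, Sum.inl '' S, hsub, indep_image_inl G hS,
          by rw [Set.ncard_image_of_injective S Sum.inl_injective, hScard]⟩
      exact le_csSup (bagAlpha_bddAbove (joinSelf G) td.bag) hmem

theorem stmt4 {V : Type} [Fintype V] (G : SimpleGraph V) :
    treeIndepNum (joinSelf G) = _root_.indepNum G := by
  have hup : tdAlpha (trivTD (joinSelf G)) = _root_.indepNum G := by
    rw [tdAlpha_trivTD, indepNum_joinSelf]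
  apply le_antisymm
  · exact Nat.sInf_le ⟨trivTD (joinSelf G), hup⟩
  · refine le_csInf ⟨_root_.indepNum G, trivTD (joinSelf G), hup⟩ ?_
    rintro k ⟨td, rfl⟩
    exact indepNum_le_tdAlpha G td
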